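/- Let L be a nonexpansive, finitarily separable fuzzy lax extension of a Set-functor T, and let (A,α), (B,β) be T-coalgebras. Define d₀ = 0 (the constant-zero fuzzy relation A ×> B), d_{n+1}(a,b) = L d_n(α(a), β(b)), and d_ω = sup_{n<ω} d_n (pointwise). Then (i) L d_ω(α(a), β(b)) = d_ω(a,b) for all a ∈ A, b ∈ B; and (ii) the L-behavioural distance d^L_{α,β}, defined as the pointwise infimum of all L-simulations from (A,α) to (B,β), equals d_ω. -/

import Mathlib

open unitInterval

noncomputable section

instance : Fact ((0:ℝ) ≤ 1) := ⟨zero_le_one⟩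

/-- A fuzzy relation between `A` and `B` is a map `A × B → [0,1]`. -/
abbrev FRel (A B : Type) : Type := A → B → I

/-- Clamp a real number into the unit interval. -/
def clamp (x : ℝ) : I := Set.projIcc 0 1 zero_le_one x

/-- Composition of fuzzy relations: `(R;S)(a,c) = inf_b min(R(a,b) + S(b,c), 1)`. -/
def fcomp {A B C : Type} (R : FRel A B) (S : FRel B C) : FRel A C :=
  fun a c => ⨅ b : B, clamp ((R a b : ℝ) + (S b c : ℝ))

/-- Converse of a fuzzy relation. -/
def fconv {A B : Type} (R : FRel A B) : FRel B A := fun b a => R a b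

open scoped Classical in
/-- The `ε`-graph of a function. -/
def fgraphE {A B : Type} (ε : I) (f : A → B) : FRel A B :=
  fun a b => if f a = b then ε else 1

/-- The graph of a function. -/
def fgraph {A B : Type} (f : A → B) : FRel A B := fgraphE 0 f

/-- The `ε`-diagonal. -/
def fdiagE (ε : I) (A : Type) : FRel A A := fgraphE ε (id : A → A)

/-- The diagonal. -/
def fdiag (A : Type) : FRel A A := fgraph (id : A → A)

/-- A Set-functor. -/
structure SetFunctor where
  obj : Type → Type
  map : {A B : Type} → (A → B) → obj A → obj B
  map_id : ∀ (A : Type), map (id : A → A) = id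
  map_comp : ∀ {A B C : Type} (f : A → B) (g : B → C), map (g ∘ f) = map g ∘ map f

/-- A fuzzy lax extension of a Set-functor. -/
structure LaxExt (T : SetFunctor) where
  lift : {A B : Type} → FRel A B → FRel (T.obj A) (T.obj B)
  mono : ∀ {A B : Type} (R S : FRel A B), R ≤ S → lift R ≤ lift S
  lax_comp : ∀ {A B C : Type} (R : FRel A B) (S : FRel B C),
    lift (fcomp R S) ≤ fcomp (lift R) (lift S)
  lax_graph : ∀ {A B : Type} (f : A → B), lift (fgraph f) ≤ fgraph (T.map f)
  lax_graph_conv : ∀ {A B : Type} (f : A → B),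
    lift (fconv (fgraph f)) ≤ fconv (fgraph (T.map f))

end

/-- `R` is an `L`-simulation between coalgebras `α` and `β`. -/
def IsSim (T : SetFunctor) (L : LaxExt T) {A B : Type}
    (α : A → T.obj A) (β : B → T.obj B) (R : FRel A B) : Prop :=
  ∀ a b, L.lift R (α a) (β b) ≤ R a b

/-- `L`-behavioural distance: the pointwise infimum of all `L`-simulations. -/
noncomputable def behDist (T : SetFunctor) (L : LaxExt T) {A B : Type}
    (α : A → T.obj A) (β : B → T.obj B) : FRel A B :=
  fun a b => ⨅ R : {R : FRel A B // IsSim T L α β R}, R.1 a b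

/-- `L` is nonexpansive: `LΔ_{ε,A} ≤ Δ_{ε,TA}` for all `A` and `ε > 0`. -/
def LaxNonexp (T : SetFunctor) (L : LaxExt T) : Prop :=
  ∀ (A : Type) (ε : I), 0 < ε → L.lift (fdiagE ε A) ≤ fdiagE ε (T.obj A)

/-- The finitary part of `T`: those elements in the image of `T.map i` for the inclusion `i`
of a finite subset. -/
def FinPart (T : SetFunctor) (X : Type) : Set (T.obj X) :=
  {t | ∃ (s : Finset X) (t' : T.obj {x : X // x ∈ s}), T.map Subtype.val t' = t}

/-- `L` is finitarily separable: for each `X`, the finitary part `T_ω X` is dense in `TX`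
with respect to the hemimetric `LΔ_X`. -/
def FinitarilySeparable (T : SetFunctor) (L : LaxExt T) : Prop :=
  ∀ (X : Type) (t : T.obj X) (ε : ℝ), 0 < ε →
    ∃ t' ∈ FinPart T X,
      (L.lift (fdiag X) t t' : ℝ) ≤ ε ∧ (L.lift (fdiag X) t' t : ℝ) ≤ ε


noncomputable section FixAux


lemma I_nonneg (x : I) : (0:ℝ) ≤ x := x.2.1
lemma I_le_one (x : I) : (x:ℝ) ≤ 1 := x.2.2

lemma clamp_coe (p : I) : clamp (p:ℝ) = p := by
  rw [clamp, Set.projIcc_of_mem zero_le_one p.2]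

lemma clamp_mono {x y : ℝ} (h : x ≤ y) : clamp x ≤ clamp y :=
  Set.monotone_projIcc zero_le_one h

lemma le_clamp {p : I} {x : ℝ} (h : (p:ℝ) ≤ x) : p ≤ clamp x := by
  rw [← clamp_coe p]; exact clamp_mono h

lemma coe_clamp_le {x : ℝ} (h : 0 ≤ x) : (clamp x : ℝ) ≤ x := by
  rw [clamp, Set.coe_projIcc]
  simp only [sup_le_iff, inf_le_iff]
  exact ⟨h, Or.inr le_rfl⟩

lemma fcomp_le_add {A B C : Type} (R : FRel A B) (S : FRel B C) (a : A) (c : C) (b : B) :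
    (fcomp R S a c : ℝ) ≤ (R a b : ℝ) + (S b c : ℝ) := by
  have h1 : fcomp R S a c ≤ clamp ((R a b:ℝ) + (S b c:ℝ)) := iInf_le _ b
  exact (Subtype.coe_le_coe.2 h1).trans (coe_clamp_le (add_nonneg (I_nonneg _) (I_nonneg _)))

lemma fgraphE_self {A B : Type} (ε : I) (f : A → B) (a : A) : fgraphE ε f a (f a) = ε := by
  simp [fgraphE]

lemma fgraphE_ne {A B : Type} (ε : I) (f : A → B) {a : A} {b : B} (h : f a ≠ b) :
    fgraphE ε f a b = 1 := by simp [fgraphE, h]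

-- pointwise composition lower bounds
lemma le_diag_comp {A B : Type} (R : FRel A B) : R ≤ fcomp (fdiag A) R := by
  intro a c
  refine le_iInf fun a' => ?_
  by_cases h : a = a'
  · subst h
    refine le_clamp ?_
    have : fdiag A a a = 0 := fgraphE_self 0 id a
    rw [this]; simp
  · have : fdiag A a a' = 1 := fgraphE_ne 0 id h
    rw [this]
    refine le_clamp ?_
    have := I_nonneg (R a' c); have := I_le_one (R a c); simp; linarith

lemma le_comp_diag {A B : Type} (R : FRel A B) : R ≤ fcomp R (fdiag B) := by
  intro a c
  refine le_iInf fun b => ?_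
  by_cases h : b = c
  · subst h
    refine le_clamp ?_
    have : fdiag B b b = 0 := fgraphE_self 0 id b
    rw [this]; simp
  · have : fdiag B b c = 1 := fgraphE_ne 0 id h
    rw [this]
    refine le_clamp ?_
    have := I_nonneg (R a b); have := I_le_one (R a c); simp; linarith

lemma le_conv_graph_comp {Y A B : Type} (f : Y → A) (R : FRel A B) :
    R ≤ fcomp (fconv (fgraph f)) (fun y c => R (f y) c) := by
  intro a c
  refine le_iInf fun y => ?_
  by_cases h : f y = a
  · subst h
    refine le_clamp ?_
    have : fconv (fgraph f) (f y) y = 0 := by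
      simpa [fconv, fgraph] using fgraphE_self 0 f y
    rw [this]; simp
  · have : fconv (fgraph f) a y = 1 := by
      simpa [fconv, fgraph] using fgraphE_ne 0 f h
    rw [this]
    refine le_clamp ?_
    have := I_nonneg (R (f y) c); have := I_le_one (R a c); simp; linarith

lemma le_comp_graph {Z A B : Type} (g : Z → B) (R : FRel A B) :
    R ≤ fcomp (fun a z => R a (g z)) (fgraph g) := by
  intro a c
  refine le_iInf fun z => ?_
  by_cases h : g z = c
  · subst h
    refine le_clamp ?_
    have : fgraph g z (g z) = 0 := fgraphE_self 0 g z
    rw [this]; simp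
  · have : fgraph g z c = 1 := fgraphE_ne 0 g h
    rw [this]
    refine le_clamp ?_
    have := I_nonneg (R a (g z)); have := I_le_one (R a c); simp; linarith

lemma le_comp_conv_graph {Z A B : Type} (g : Z → B) (R : FRel A B) :
    (fun a z => R a (g z)) ≤ fcomp R (fconv (fgraph g)) := by
  intro a z
  refine le_iInf fun b => ?_
  by_cases h : g z = b
  · subst h
    refine le_clamp ?_
    have : fconv (fgraph g) (g z) z = 0 := by
      simpa [fconv, fgraph] using fgraphE_self 0 g z
    rw [this]; simp
  · have : fconv (fgraph g) b z = 1 := by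
      simpa [fconv, fgraph] using fgraphE_ne 0 g h
    rw [this]
    refine le_clamp ?_
    have := I_le_one (R a (g z)); have := I_nonneg (R a b); simp; linarith

lemma le_graph_comp {Y A B : Type} (f : Y → A) (R : FRel A B) :
    (fun y c => R (f y) c) ≤ fcomp (fgraph f) R := by
  intro y c
  refine le_iInf fun a => ?_
  by_cases h : f y = a
  · subst h
    refine le_clamp ?_
    have : fgraph f y (f y) = 0 := fgraphE_self 0 f y
    rw [this]; simp
  · have : fgraph f y a = 1 := fgraphE_ne 0 f h
    rw [this]
    refine le_clamp ?_
    have := I_nonneg (R a c); have := I_le_one (R (f y) c); simp; linarith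

-- eps diagonal comp
lemma le_diagE_comp {A B : Type} (ε : I) (R S : FRel A B)
    (h : ∀ a b, (R a b : ℝ) ≤ (S a b : ℝ) + ε) : R ≤ fcomp (fdiagE ε A) S := by
  intro a c
  refine le_iInf fun a' => ?_
  by_cases ha : a = a'
  · subst ha
    refine le_clamp ?_
    have : fdiagE ε A a a = ε := fgraphE_self ε id a
    rw [this]; linarith [h a c]
  · have : fdiagE ε A a a' = 1 := fgraphE_ne ε id ha
    rw [this]
    refine le_clamp ?_
    have := I_nonneg (S a' c); have := I_le_one (R a c); simp; linarith


lemma lift_step (T : SetFunctor) (L : LaxExt T) {X Y Z : Type}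
    (P : FRel X Z) (R : FRel X Y) (S : FRel Y Z) (h : P ≤ fcomp R S)
    (t : T.obj X) (u : T.obj Y) (s : T.obj Z) :
    (L.lift P t s : ℝ) ≤ (L.lift R t u : ℝ) + (L.lift S u s : ℝ) := by
  have h1 : L.lift P t s ≤ L.lift (fcomp R S) t s := L.mono _ _ h t s
  have h2 : L.lift (fcomp R S) t s ≤ fcomp (L.lift R) (L.lift S) t s := L.lax_comp R S t s
  exact (Subtype.coe_le_coe.2 (h1.trans h2)).trans (fcomp_le_add _ _ _ _ u)

lemma lift_graph_zero (T : SetFunctor) (L : LaxExt T) {X Y : Type} (f : X → Y)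
    {u : T.obj X} {v : T.obj Y} (h : T.map f u = v) :
    (L.lift (fgraph f) u v : ℝ) ≤ 0 := by
  have h1 : L.lift (fgraph f) u v ≤ fgraph (T.map f) u v := L.lax_graph f u v
  have h2 : fgraph (T.map f) u v = 0 := by rw [← h]; exact fgraphE_self 0 _ u
  rw [h2] at h1
  simpa using Subtype.coe_le_coe.2 h1

lemma lift_graph_conv_zero (T : SetFunctor) (L : LaxExt T) {X Y : Type} (f : X → Y)
    {u : T.obj X} {v : T.obj Y} (h : T.map f u = v) :
    (L.lift (fconv (fgraph f)) v u : ℝ) ≤ 0 := by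
  have h1 : L.lift (fconv (fgraph f)) v u ≤ fconv (fgraph (T.map f)) v u :=
    L.lax_graph_conv f v u
  have h2 : fconv (fgraph (T.map f)) v u = 0 := by
    show fgraph (T.map f) u v = 0
    rw [← h]; exact fgraphE_self 0 _ u
  rw [h2] at h1
  simpa using Subtype.coe_le_coe.2 h1

lemma key_nonexp (T : SetFunctor) (L : LaxExt T) (hne : LaxNonexp T L) {X Y : Type}
    (R S : FRel X Y) (ε : I) (hε : 0 < ε)
    (h : ∀ x y, (R x y : ℝ) ≤ (S x y : ℝ) + ε) (t : T.obj X) (s : T.obj Y) :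
    (L.lift R t s : ℝ) ≤ (L.lift S t s : ℝ) + ε := by
  have h1 : R ≤ fcomp (fdiagE ε X) S := le_diagE_comp ε R S h
  have h2 : (L.lift R t s : ℝ) ≤ (L.lift (fdiagE ε X) t t : ℝ) + (L.lift S t s : ℝ) :=
    lift_step T L R (fdiagE ε X) S h1 t t s
  have h3 : L.lift (fdiagE ε X) t t ≤ fdiagE ε (T.obj X) t t := hne X ε hε t t
  have h4 : fdiagE ε (T.obj X) t t = ε := fgraphE_self ε id t
  rw [h4] at h3
  have := Subtype.coe_le_coe.2 h3
  linarith

end FixAux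

/-- for a nonexpansive finitarily separable lax extension, the fixpoint
iteration `d₀ = 0`, `d_{n+1} = Ld_n ∘ (α × β)` converges at `ω`, and its supremum `d_ω`
equals `L`-behavioural distance. -/
theorem fixpoint_iteration_omega (T : SetFunctor) (L : LaxExt T)
    (hne : LaxNonexp T L) (hsep : FinitarilySeparable T L)
    (A B : Type) (α : A → T.obj A) (β : B → T.obj B)
    (d : ℕ → FRel A B)
    (hd0 : ∀ a b, d 0 a b = 0)
    (hdsucc : ∀ n a b, d (n + 1) a b = L.lift (d n) (α a) (β b)) :
    (∀ a b, L.lift (fun a b => ⨆ n : ℕ, d n a b) (α a) (β b) = ⨆ n : ℕ, d n a b) ∧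
    (∀ a b, behDist T L α β a b = ⨆ n : ℕ, d n a b) := by
  classical
  set dw : FRel A B := (fun a b => ⨆ n : ℕ, d n a b) with hdwdef
  have I_zero_le : ∀ x : I, (0:I) ≤ x := fun x => Subtype.coe_le_coe.1 (by simpa using I_nonneg x)
  have hstep : ∀ n, d n ≤ d (n+1) := by
    intro n
    induction n with
    | zero => intro a b; rw [hd0]; exact I_zero_le _
    | succ n ih => intro a b; rw [hdsucc, hdsucc]; exact L.mono _ _ ih (α a) (β b)
  have hmono : Monotone d := monotone_nat_of_le_succ hstep
  have hle_dw : ∀ n, d n ≤ dw := fun n a b => le_iSup (fun k => d k a b) n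
  -- the key upper bound
  have hmain : ∀ a b, (L.lift dw (α a) (β b) : ℝ) ≤ (dw a b : ℝ) := by
    intro a b
    refine le_of_forall_pos_le_add fun ε hε => ?_
    set δR : ℝ := min (ε/5) 1 with hδRdef
    have hδRpos : 0 < δR := lt_min (by linarith) one_pos
    have hδR1 : δR ≤ 1 := min_le_right _ _
    set δ : I := ⟨δR, le_of_lt hδRpos, hδR1⟩ with hδdef
    have hδpos : (0:I) < δ := Subtype.coe_lt_coe.1 (by show ((0:I):ℝ) < δR; simpa using hδRpos)
    obtain ⟨t', htfin, hA1, hA2⟩ := hsep A (α a) δR hδRpos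
    obtain ⟨sA, t'', ht''⟩ := htfin
    obtain ⟨s', hsfin, hB1, hB2⟩ := hsep B (β b) δR hδRpos
    obtain ⟨sB, s'', hs''⟩ := hsfin
    -- fix uniform approximation stage N on the finite parts
    have hptN : ∀ p : ({x : A // x ∈ sA} × {x : B // x ∈ sB}),
        ∃ n, (dw p.1.val p.2.val : ℝ) ≤ (d n p.1.val p.2.val : ℝ) + δR := by
      intro p
      by_contra hc
      push_neg at hc
      have hrI : ((dw p.1.val p.2.val : ℝ) - δR) ∈ Set.Icc (0:ℝ) 1 := by
        constructor
        · have := hc 0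
          rw [hd0] at this
          have h00 : ((0:I):ℝ) = 0 := by simp
          rw [h00] at this; linarith
        · linarith [I_le_one (dw p.1.val p.2.val)]
      have hub : ∀ n, d n p.1.val p.2.val ≤ (⟨_, hrI⟩ : I) := by
        intro n
        refine Subtype.coe_le_coe.1 ?_
        have := hc n
        show (d n p.1.val p.2.val : ℝ) ≤ (dw p.1.val p.2.val : ℝ) - δR
        linarith
      have h2 : dw p.1.val p.2.val ≤ (⟨_, hrI⟩ : I) := iSup_le hub
      have h3 := Subtype.coe_le_coe.2 h2
      simp only at h3
      linarith
    choose f hf using hptN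
    set N : ℕ := Finset.univ.sup f with hNdef
    have hN : ∀ (y : {x : A // x ∈ sA}) (z : {x : B // x ∈ sB}),
        (dw y.val z.val : ℝ) ≤ (d N y.val z.val : ℝ) + δR := by
      intro y z
      have h1 := hf (y, z)
      have h2 : d (f (y, z)) y.val z.val ≤ d N y.val z.val :=
        hmono (Finset.le_sup (Finset.mem_univ _)) y.val z.val
      have h3 := Subtype.coe_le_coe.2 h2
      exact h1.trans (by linarith)
    -- notation for the restricted relations
    set i : {x : A // x ∈ sA} → A := Subtype.val with hidef
    set j : {x : B // x ∈ sB} → B := Subtype.val with hjdef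
    set S : FRel {x : A // x ∈ sA} B := fun y c => dw (i y) c with hSdef
    set SZ : FRel {x : A // x ∈ sA} {x : B // x ∈ sB} := fun y z => dw (i y) (j z) with hSZdef
    set SZN : FRel {x : A // x ∈ sA} {x : B // x ∈ sB} := fun y z => d N (i y) (j z) with hSZNdef
    set Q : FRel A {x : B // x ∈ sB} := fun x z => d N x (j z) with hQdef
    -- the chain of inequalities
    have step1 : (L.lift dw (α a) (β b) : ℝ) ≤
        (L.lift (fdiag A) (α a) t' : ℝ) + (L.lift dw t' (β b) : ℝ) :=
      lift_step T L dw (fdiag A) dw (le_diag_comp dw) (α a) t' (β b)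
    have step2 : (L.lift dw t' (β b) : ℝ) ≤
        (L.lift (fconv (fgraph i)) t' t'' : ℝ) + (L.lift S t'' (β b) : ℝ) :=
      lift_step T L dw (fconv (fgraph i)) S (le_conv_graph_comp i dw) t' t'' (β b)
    have step2' : (L.lift (fconv (fgraph i)) t' t'' : ℝ) ≤ 0 :=
      lift_graph_conv_zero T L i ht''
    have step3 : (L.lift S t'' (β b) : ℝ) ≤
        (L.lift S t'' s' : ℝ) + (L.lift (fdiag B) s' (β b) : ℝ) :=
      lift_step T L S S (fdiag B) (le_comp_diag S) t'' s' (β b)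
    have step4 : (L.lift S t'' s' : ℝ) ≤
        (L.lift SZ t'' s'' : ℝ) + (L.lift (fgraph j) s'' s' : ℝ) :=
      lift_step T L S SZ (fgraph j) (le_comp_graph j S) t'' s'' s'
    have step4' : (L.lift (fgraph j) s'' s' : ℝ) ≤ 0 :=
      lift_graph_zero T L j hs''
    have step5 : (L.lift SZ t'' s'' : ℝ) ≤ (L.lift SZN t'' s'' : ℝ) + δR :=
      key_nonexp T L hne SZ SZN δ hδpos (fun y z => hN y z) t'' s''
    have step6a : (L.lift SZN t'' s'' : ℝ) ≤
        (L.lift (fgraph i) t'' t' : ℝ) + (L.lift Q t' s'' : ℝ) :=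
      lift_step T L SZN (fgraph i) Q (le_graph_comp i Q) t'' t' s''
    have step6a' : (L.lift (fgraph i) t'' t' : ℝ) ≤ 0 :=
      lift_graph_zero T L i ht''
    have step6b : (L.lift Q t' s'' : ℝ) ≤
        (L.lift (d N) t' s' : ℝ) + (L.lift (fconv (fgraph j)) s' s'' : ℝ) :=
      lift_step T L Q (d N) (fconv (fgraph j)) (le_comp_conv_graph j (d N)) t' s' s''
    have step6b' : (L.lift (fconv (fgraph j)) s' s'' : ℝ) ≤ 0 :=
      lift_graph_conv_zero T L j hs''
    have step7a : (L.lift (d N) t' s' : ℝ) ≤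
        (L.lift (fdiag A) t' (α a) : ℝ) + (L.lift (d N) (α a) s' : ℝ) :=
      lift_step T L (d N) (fdiag A) (d N) (le_diag_comp (d N)) t' (α a) s'
    have step7b : (L.lift (d N) (α a) s' : ℝ) ≤
        (L.lift (d N) (α a) (β b) : ℝ) + (L.lift (fdiag B) (β b) s' : ℝ) :=
      lift_step T L (d N) (d N) (fdiag B) (le_comp_diag (d N)) (α a) (β b) s'
    have step8 : (L.lift (d N) (α a) (β b) : ℝ) = (d (N+1) a b : ℝ) := by rw [hdsucc]
    have step9 : (d (N+1) a b : ℝ) ≤ (dw a b : ℝ) :=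
      Subtype.coe_le_coe.2 (hle_dw (N+1) a b)
    have hδε : 5 * δR ≤ ε := by
      have : δR ≤ ε / 5 := min_le_left _ _
      linarith
    linarith
  -- part (i)
  have hfix : ∀ a b, L.lift dw (α a) (β b) = dw a b := by
    intro a b
    refine le_antisymm (Subtype.coe_le_coe.1 (hmain a b)) ?_
    show (⨆ n : ℕ, d n a b) ≤ L.lift dw (α a) (β b)
    refine iSup_le fun n => ?_
    cases n with
    | zero => rw [hd0]; exact I_zero_le _
    | succ n =>
      rw [hdsucc]
      exact L.mono _ _ (hle_dw n) (α a) (β b)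
  refine ⟨fun a b => hfix a b, ?_⟩
  -- part (ii)
  have hsim : IsSim T L α β dw := fun a b => le_of_eq (hfix a b)
  have hlb : ∀ (R : FRel A B), IsSim T L α β R → ∀ n, d n ≤ R := by
    intro R hR n
    induction n with
    | zero => intro a b; rw [hd0]; exact I_zero_le _
    | succ n ih =>
      intro a b
      rw [hdsucc]
      exact (L.mono _ _ ih (α a) (β b)).trans (hR a b)
  intro a b
  refine le_antisymm ?_ ?_
  · exact iInf_le (fun R : {R : FRel A B // IsSim T L α β R} => R.1 a b) ⟨dw, hsim⟩
  · show (dw a b : I) ≤ behDist T L α β a b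
    refine le_iInf fun R => ?_
    show (⨆ n : ℕ, d n a b) ≤ R.1 a b
    exact iSup_le fun n => hlb R.1 R.2 n a b
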